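/- arXiv:1710.02396 — 2 statements merged into one kernel-verified Lean document; each statement's English description precedes it below -/
import Mathlib

section
/- Let B̂ₖ = B̂₀ − [B̂₀S Y] K⁻¹ [B̂₀S Y]ᵀ with B̂₀ = γP∥P∥ᵀ + γ⊥P⊥P⊥ᵀ, and Bₖ = γI − [γS Y] K⁻¹ [γS Y]ᵀ where K is the same invertible block matrix in both (valid since B̂₀S = γS when Range(S) ⊆ Range(P∥) and Range(Y) ⊆ Range(P∥)). Then B̂ₖ and Bₖ have the same action on Range(P∥), and B̂ₖ − Bₖ = (γ⊥ − γ)P⊥P⊥ᵀ. -/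
open Matrix

/-- With `B̂₀ = γP∥P∥ᵀ + γ⊥P⊥P⊥ᵀ`, `B̂ₖ = B̂₀ − [B̂₀S Y]K⁻¹[B̂₀S Y]ᵀ` and
`Bₖ = γI − [γS Y]K⁻¹[γS Y]ᵀ` (same invertible `K`), where the columns of `S`
and `Y` lie in `Range(P∥)`: `B̂ₖ` and `Bₖ` agree on `Range(P∥)`, and
`B̂ₖ − Bₖ = (γ⊥ − γ)P⊥P⊥ᵀ`. -/
theorem dense_vs_diagonal_update
    (n r m : ℕ) (γ γperp : ℝ)
    (Ppar : Matrix (Fin n) (Fin r) ℝ) (Pperp : Matrix (Fin n) (Fin (n - r)) ℝ)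
    (hpar : Pparᵀ * Ppar = 1) (hperp : Pperpᵀ * Pperp = 1)
    (horth : Pparᵀ * Pperp = 0)
    (hcomplete : Ppar * Pparᵀ + Pperp * Pperpᵀ = 1)
    (S Y : Matrix (Fin n) (Fin m) ℝ)
    (hS : ∃ C : Matrix (Fin r) (Fin m) ℝ, S = Ppar * C)
    (hY : ∃ C : Matrix (Fin r) (Fin m) ℝ, Y = Ppar * C)
    (K : Matrix (Fin m ⊕ Fin m) (Fin m ⊕ Fin m) ℝ) (hK : IsUnit K.det)
    (B0hat Bkhat Bk : Matrix (Fin n) (Fin n) ℝ)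
    (hB0hat : B0hat = γ • (Ppar * Pparᵀ) + γperp • (Pperp * Pperpᵀ))
    (hBkhat : Bkhat = B0hat
        - Matrix.fromCols (B0hat * S) Y * K⁻¹ * (Matrix.fromCols (B0hat * S) Y)ᵀ)
    (hBk : Bk = γ • (1 : Matrix (Fin n) (Fin n) ℝ)
        - Matrix.fromCols (γ • S) Y * K⁻¹ * (Matrix.fromCols (γ • S) Y)ᵀ) :
    (∀ c : Fin r → ℝ, Bkhat *ᵥ (Ppar *ᵥ c) = Bk *ᵥ (Ppar *ᵥ c)) ∧
      Bkhat - Bk = (γperp - γ) • (Pperp * Pperpᵀ) := by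
  have hperpT : Pperpᵀ * Ppar = 0 := by
    have := congrArg Matrix.transpose horth
    simpa using this
  have hBS : B0hat * S = γ • S := by
    obtain ⟨C, rfl⟩ := hS
    have e1 : Ppar * Pparᵀ * (Ppar * C) = Ppar * C := by
      rw [Matrix.mul_assoc, ← Matrix.mul_assoc Pparᵀ, hpar, Matrix.one_mul]
    have e2 : Pperp * Pperpᵀ * (Ppar * C) = 0 := by
      rw [Matrix.mul_assoc, ← Matrix.mul_assoc Pperpᵀ, hperpT, Matrix.zero_mul,
        Matrix.mul_zero]
    rw [hB0hat, Matrix.add_mul, Matrix.smul_mul, Matrix.smul_mul, e1, e2, smul_zero,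
      add_zero]
  have hdiff : Bkhat - Bk = (γperp - γ) • (Pperp * Pperpᵀ) := by
    rw [hBkhat, hBk, hBS]
    have h1 : (γ : ℝ) • (1 : Matrix (Fin n) (Fin n) ℝ)
        = γ • (Ppar * Pparᵀ) + γ • (Pperp * Pperpᵀ) := by
      rw [← smul_add, hcomplete]
    rw [hB0hat, h1]
    module
  refine ⟨fun c => ?_, hdiff⟩
  have : (Bkhat - Bk) *ᵥ (Ppar *ᵥ c) = 0 := by
    rw [hdiff, Matrix.smul_mulVec, Matrix.mulVec_mulVec, Matrix.mul_assoc,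
      hperpT, Matrix.mul_zero, Matrix.zero_mulVec, smul_zero]
  rw [Matrix.sub_mulVec] at this
  exact sub_eq_zero.mp this
end

section
/- For the shape-changing norm ‖p‖_{P,∞} := max(‖P∥ᵀp‖_∞, ‖P⊥ᵀp‖₂), every p ∈ ℝⁿ satisfies ‖p‖_{P,∞} ≤ ‖p‖₂ ≤ √(r+1)·‖p‖_{P,∞}. -/
open Matrix

/-- Norm equivalence for the shape-changing norm
`‖p‖_{P,∞} = max(‖P∥ᵀp‖_∞, ‖P⊥ᵀp‖₂)`:
`‖p‖_{P,∞} ≤ ‖p‖₂ ≤ √(r+1)·‖p‖_{P,∞}`. -/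
theorem shape_changing_norm_equivalence
    (n r : ℕ)
    (Ppar : Matrix (Fin n) (Fin r) ℝ) (Pperp : Matrix (Fin n) (Fin (n - r)) ℝ)
    (hpar : Pparᵀ * Ppar = 1) (hperp : Pperpᵀ * Pperp = 1)
    (horth : Pparᵀ * Pperp = 0)
    (hcomplete : Ppar * Pparᵀ + Pperp * Pperpᵀ = 1)
    (p : Fin n → ℝ) :
    max (⨆ i : Fin r, |(Pparᵀ *ᵥ p) i|) (Real.sqrt (∑ j, ((Pperpᵀ *ᵥ p) j)^2))
        ≤ Real.sqrt (∑ i, (p i)^2) ∧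
    Real.sqrt (∑ i, (p i)^2)
        ≤ Real.sqrt (r + 1) *
          max (⨆ i : Fin r, |(Pparᵀ *ᵥ p) i|) (Real.sqrt (∑ j, ((Pperpᵀ *ᵥ p) j)^2)) := by
  set x := Pparᵀ *ᵥ p with hx
  set y := Pperpᵀ *ᵥ p with hy
  have key : ∑ i, (p i)^2 = ∑ i, (x i)^2 + ∑ j, (y j)^2 := by
    have hdot : ∀ {k : ℕ} (v : Fin k → ℝ), ∑ i, (v i)^2 = v ⬝ᵥ v := by
      intro k v; simp [dotProduct, sq]
    rw [hdot p, hdot x, hdot y, hx, hy]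
    have h1 : (Pparᵀ *ᵥ p) ⬝ᵥ (Pparᵀ *ᵥ p) = p ⬝ᵥ ((Ppar * Pparᵀ) *ᵥ p) := by
      rw [dotProduct_mulVec, vecMul_transpose, dotProduct_comm, mulVec_mulVec]
    have h2 : (Pperpᵀ *ᵥ p) ⬝ᵥ (Pperpᵀ *ᵥ p) = p ⬝ᵥ ((Pperp * Pperpᵀ) *ᵥ p) := by
      rw [dotProduct_mulVec, vecMul_transpose, dotProduct_comm, mulVec_mulVec]
    rw [h1, h2, ← dotProduct_add, ← add_mulVec, hcomplete, one_mulVec]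
  set M := max (⨆ i : Fin r, |x i|) (Real.sqrt (∑ j, (y j)^2)) with hM
  have ha : (0:ℝ) ≤ ∑ i, (x i)^2 := Finset.sum_nonneg fun i _ => sq_nonneg _
  have hb : (0:ℝ) ≤ ∑ j, (y j)^2 := Finset.sum_nonneg fun j _ => sq_nonneg _
  have hM0 : 0 ≤ M := le_max_of_le_right (Real.sqrt_nonneg _)
  have hsum : Real.sqrt (∑ i, (p i)^2) = Real.sqrt (∑ i, (x i)^2 + ∑ j, (y j)^2) := by
    rw [key]
  constructor
  · rw [hsum]
    apply max_le
    · apply Real.iSup_le _ (Real.sqrt_nonneg _)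
      intro i
      have h1 : (x i)^2 ≤ ∑ i, (x i)^2 + ∑ j, (y j)^2 := by
        have := Finset.single_le_sum (f := fun i => (x i)^2)
          (fun i _ => sq_nonneg _) (Finset.mem_univ i)
        linarith
      calc |x i| = Real.sqrt ((x i)^2) := (Real.sqrt_sq_eq_abs _).symm
        _ ≤ _ := Real.sqrt_le_sqrt h1
    · exact Real.sqrt_le_sqrt (by linarith)
  · rw [hsum]
    have hxM : ∀ i, |x i| ≤ M := fun i =>
      le_trans (le_ciSup (f := fun i => |x i|) (Set.Finite.bddAbove (Set.finite_range _)) i) (le_max_left _ _)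
    have hA : ∑ i, (x i)^2 ≤ r * M^2 := by
      calc ∑ i, (x i)^2 ≤ ∑ _i : Fin r, M^2 := by
            apply Finset.sum_le_sum
            intro i _
            calc (x i)^2 = |x i|^2 := (sq_abs _).symm
              _ ≤ M^2 := by nlinarith [hxM i, abs_nonneg (x i)]
        _ = r * M^2 := by simp [mul_comm]
    have hB : ∑ j, (y j)^2 ≤ M^2 := by
      have h := le_max_right (⨆ i : Fin r, |x i|) (Real.sqrt (∑ j, (y j)^2))
      calc ∑ j, (y j)^2 = Real.sqrt (∑ j, (y j)^2)^2 := (Real.sq_sqrt hb).symm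
        _ ≤ M^2 := by nlinarith [Real.sqrt_nonneg (∑ j, (y j)^2)]
    calc Real.sqrt (∑ i, (x i)^2 + ∑ j, (y j)^2)
        ≤ Real.sqrt ((r + 1) * M^2) := Real.sqrt_le_sqrt (by linarith)
      _ = Real.sqrt (r + 1) * M := by
          rw [Real.sqrt_mul (by positivity), Real.sqrt_sq hM0]
end
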